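/- Let n ≥ 3 and let A be an n×n real symmetric trace-free matrix, W a totally trace-free (0,4)-tensor with Weyl symmetries, g the identity. Then |Σ (W + (√(2n)/(4(n−2)))·A⊙g)_{ijkl}·(A⊙A)_{ijkl}|² ≤ (8(n−2)/(n−1))·‖A‖⁴·(|W|² + (n/(2(n−2)))‖A‖²). -/

import Mathlib

open Finset

lemma sum_if_const {n : ℕ} (c : Prop) [Decidable c] (f : Fin n → ℝ) :
    (∑ x, if c then f x else 0) = if c then ∑ x, f x else 0 := by split <;> simp

lemma ite_ite_same (c : Prop) [Decidable c] (a : ℝ) :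
    (if c then (if c then a else (0:ℝ)) else 0) = if c then a else 0 := by split <;> rfl

lemma swap23 {n : ℕ} (f : Fin n → Fin n → Fin n → ℝ) :
    ∑ a, ∑ b, ∑ c, f a b c = ∑ a, ∑ c, ∑ b, f a b c :=
  Finset.sum_congr rfl fun _ _ => Finset.sum_comm

lemma rot3 {n : ℕ} (f : Fin n → Fin n → Fin n → ℝ) :
    ∑ a, ∑ b, ∑ c, f a b c = ∑ b, ∑ c, ∑ a, f a b c := by
  rw [Finset.sum_comm]; exact Finset.sum_congr rfl fun _ _ => Finset.sum_comm

lemma cs4 {n : ℕ} (f g : Fin n → Fin n → Fin n → Fin n → ℝ) :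
    (∑ i, ∑ j, ∑ k, ∑ l, f i j k l * g i j k l)^2 ≤
      (∑ i, ∑ j, ∑ k, ∑ l, (f i j k l)^2) * (∑ i, ∑ j, ∑ k, ∑ l, (g i j k l)^2) := by
  have h := Finset.sum_mul_sq_le_sq_mul_sq Finset.univ
    (fun p : Fin n × Fin n × Fin n × Fin n => f p.1 p.2.1 p.2.2.1 p.2.2.2)
    (fun p : Fin n × Fin n × Fin n × Fin n => g p.1 p.2.1 p.2.2.1 p.2.2.2)
  simpa [Fintype.sum_prod_type] using h

lemma cs2 {n : ℕ} (f g : Fin n → Fin n → ℝ) :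
    (∑ i, ∑ j, f i j * g i j)^2 ≤ (∑ i, ∑ j, (f i j)^2) * (∑ i, ∑ j, (g i j)^2) := by
  have h := Finset.sum_mul_sq_le_sq_mul_sq Finset.univ
    (fun p : Fin n × Fin n => f p.1 p.2) (fun p : Fin n × Fin n => g p.1 p.2)
  simpa [Fintype.sum_prod_type] using h

lemma wzero {n : ℕ} (W : Fin n → Fin n → Fin n → Fin n → ℝ)
    (hW1 : ∀ i j k l, W i j k l = - W j i k l)
    (hW2 : ∀ i j k l, W i j k l = - W i j l k)
    (hTrW : ∀ j l, ∑ i, W i j i l = 0) (M : Fin n → Fin n → ℝ) :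
    ∑ i, ∑ j, ∑ k, ∑ l, W i j k l *
      (M i k * (if j = l then (1:ℝ) else 0) - M i l * (if j = k then (1:ℝ) else 0)
        + M j l * (if i = k then (1:ℝ) else 0) - M j k * (if i = l then (1:ℝ) else 0)) = 0 := by
  have trW24 : ∀ i k, ∑ j, W i j k j = 0 := by
    intro i k
    have h : ∀ j, W i j k j = W j i j k := by intro j; rw [hW1, hW2]; ring
    simp_rw [h]; exact hTrW i k
  have trW23 : ∀ i l, ∑ j, W i j j l = 0 := by
    intro i l
    have h : ∀ j, W i j j l = - W i j l j := by intro j; rw [hW2 i j j l]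
    simp_rw [h, Finset.sum_neg_distrib, trW24, neg_zero]
  have trW14 : ∀ j k, ∑ i, W i j k i = 0 := by
    intro j k
    have h : ∀ i, W i j k i = - W i j i k := by intro i; rw [hW2 i j k i]
    simp_rw [h, Finset.sum_neg_distrib, hTrW, neg_zero]
  simp only [mul_sub, mul_add, Finset.sum_sub_distrib, Finset.sum_add_distrib]
  simp only [mul_ite, mul_one, mul_zero, sum_if_const, ite_ite_same, Finset.sum_ite_eq,
    Finset.sum_ite_eq', Finset.mem_univ, if_true]
  have e1 : ∑ x : Fin n, ∑ x1 : Fin n, ∑ x2 : Fin n, W x x1 x2 x1 * M x x2 = 0 := by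
    rw [swap23]
    simp only [← Finset.sum_mul, trW24, zero_mul, Finset.sum_const_zero]
  have e2 : ∑ x : Fin n, ∑ x1 : Fin n, ∑ x2 : Fin n, W x x1 x1 x2 * M x x2 = 0 := by
    rw [swap23]
    simp only [← Finset.sum_mul, trW23, zero_mul, Finset.sum_const_zero]
  have e3 : ∑ x : Fin n, ∑ x1 : Fin n, ∑ x2 : Fin n, W x x1 x x2 * M x1 x2 = 0 := by
    rw [rot3]
    simp only [← Finset.sum_mul, hTrW, zero_mul, Finset.sum_const_zero]
  have e4 : ∑ x : Fin n, ∑ x1 : Fin n, ∑ x2 : Fin n, W x x1 x2 x * M x1 x2 = 0 := by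
    rw [rot3]
    simp only [← Finset.sum_mul, trW14, zero_mul, Finset.sum_const_zero]
  rw [e1, e2, e3, e4]; ring

lemma knAKA {n : ℕ} (A M : Fin n → Fin n → ℝ) (htr : ∑ i, A i i = 0) :
    ∑ i, ∑ j, ∑ k, ∑ l, (2*(A i k * A j l - A i l * A j k)) *
      (M i k * (if j = l then (1:ℝ) else 0) - M i l * (if j = k then (1:ℝ) else 0)
        + M j l * (if i = k then (1:ℝ) else 0) - M j k * (if i = l then (1:ℝ) else 0))
    = -8 * ∑ i, ∑ k, (∑ j, A i j * A j k) * M i k := by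
  have expand : ∀ (a b p q r s : ℝ), (2*(a - b)) * (p - q + r - s) =
      2*a*p - 2*a*q + 2*a*r - 2*a*s - 2*b*p + 2*b*q - 2*b*r + 2*b*s := by intros; ring
  simp only [expand]
  simp only [mul_ite, ite_mul, mul_one, mul_zero, zero_mul, mul_assoc]
  simp only [Finset.sum_add_distrib, Finset.sum_sub_distrib]
  simp only [sum_if_const, ite_ite_same, Finset.sum_ite_eq, Finset.sum_ite_eq',
    Finset.mem_univ, if_true, Finset.sum_const, Finset.card_univ, Fintype.card_fin, nsmul_eq_mul]
  have e1 : ∑ x : Fin n, ∑ x1 : Fin n, ∑ x2 : Fin n, 2 * (A x x2 * (A x1 x1 * M x x2)) = 0 := by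
    have h : ∀ x x1 x2 : Fin n, 2 * (A x x2 * (A x1 x1 * M x x2))
        = A x1 x1 * (2 * (A x x2 * M x x2)) := fun _ _ _ => by ring
    simp_rw [h, ← Finset.mul_sum, ← Finset.sum_mul, htr, zero_mul, Finset.sum_const_zero]
  have e3 : ∑ x : Fin n, ∑ x1 : Fin n, ∑ x2 : Fin n, 2 * (A x x * (A x1 x2 * M x1 x2)) = 0 := by
    have h : ∀ x x1 x2 : Fin n, 2 * (A x x * (A x1 x2 * M x1 x2))
        = A x x * (2 * (A x1 x2 * M x1 x2)) := fun _ _ _ => by ring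
    simp_rw [h, ← Finset.mul_sum, ← Finset.sum_mul, htr, zero_mul]
  have e2 : ∑ x : Fin n, ∑ x1 : Fin n, ∑ x2 : Fin n, 2 * (A x x1 * (A x1 x2 * M x x2))
      = 2 * ∑ i, ∑ k, (∑ j, A i j * A j k) * M i k := by
    rw [swap23 (fun x x1 x2 => 2 * (A x x1 * (A x1 x2 * M x x2)))]
    have h : ∀ x x2 x1 : Fin n, 2 * (A x x1 * (A x1 x2 * M x x2))
        = (A x x1 * A x1 x2) * (2 * M x x2) := fun _ _ _ => by ring
    simp_rw [h, ← Finset.sum_mul, Finset.mul_sum]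
    exact Finset.sum_congr rfl fun _ _ => Finset.sum_congr rfl fun _ _ => by ring
  have e4 : ∑ x : Fin n, ∑ x1 : Fin n, ∑ x2 : Fin n, 2 * (A x x2 * (A x1 x * M x1 x2))
      = 2 * ∑ i, ∑ k, (∑ j, A i j * A j k) * M i k := by
    rw [rot3 (fun x x1 x2 => 2 * (A x x2 * (A x1 x * M x1 x2)))]
    have h : ∀ x1 x2 x : Fin n, 2 * (A x x2 * (A x1 x * M x1 x2))
        = (A x1 x * A x x2) * (2 * M x1 x2) := fun _ _ _ => by ring
    simp_rw [h, ← Finset.sum_mul, Finset.mul_sum]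
    exact Finset.sum_congr rfl fun _ _ => Finset.sum_congr rfl fun _ _ => by ring
  rw [e1, e2, e3, e4]; ring

lemma akasq {n : ℕ} (A : Fin n → Fin n → ℝ) :
    ∑ i, ∑ j, ∑ k, ∑ l, (2*(A i k * A j l - A i l * A j k))^2
    = 8*(∑ i, ∑ j, (A i j)^2)^2 - 8*∑ i, ∑ j, (∑ k, A i k * A j k)^2 := by
  have expand : ∀ (a b : ℝ), (2*(a - b))^2 = 4*(a^2) - 8*(a*b) + 4*(b^2) := by intros; ring
  simp only [expand]
  simp only [Finset.sum_add_distrib, Finset.sum_sub_distrib, ← Finset.mul_sum]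
  have q1 : ∑ x : Fin n, ∑ x1 : Fin n, ∑ x2 : Fin n, ∑ x3 : Fin n, (A x x2 * A x1 x3)^2
      = (∑ i : Fin n, ∑ j : Fin n, (A i j)^2)^2 := by
    rw [sq, Finset.sum_mul_sum]
    refine Finset.sum_congr rfl fun x _ => Finset.sum_congr rfl fun x1 _ => ?_
    rw [Finset.sum_mul_sum]
    exact Finset.sum_congr rfl fun _ _ => Finset.sum_congr rfl fun _ _ => by ring
  have q3 : ∑ x : Fin n, ∑ x1 : Fin n, ∑ x2 : Fin n, ∑ x3 : Fin n, (A x x3 * A x1 x2)^2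
      = (∑ i : Fin n, ∑ j : Fin n, (A i j)^2)^2 := by
    rw [sq, Finset.sum_mul_sum]
    refine Finset.sum_congr rfl fun x _ => Finset.sum_congr rfl fun x1 _ => ?_
    rw [Finset.sum_mul_sum, Finset.sum_comm]
    exact Finset.sum_congr rfl fun _ _ => Finset.sum_congr rfl fun _ _ => by ring
  have q2 : ∑ x : Fin n, ∑ x1 : Fin n, ∑ x2 : Fin n, ∑ x3 : Fin n,
        (A x x2 * A x1 x3 * (A x x3 * A x1 x2))
      = ∑ i : Fin n, ∑ j : Fin n, (∑ k : Fin n, A i k * A j k)^2 := by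
    refine Finset.sum_congr rfl fun x _ => Finset.sum_congr rfl fun x1 _ => ?_
    rw [sq, Finset.sum_mul_sum]
    exact Finset.sum_congr rfl fun _ _ => Finset.sum_congr rfl fun _ _ => by ring
  rw [q1, q2, q3]; ring

lemma knsq {n : ℕ} (M : Fin n → Fin n → ℝ) :
    ∑ i, ∑ j, ∑ k, ∑ l, (M i k * (if j = l then (1:ℝ) else 0) - M i l * (if j = k then (1:ℝ) else 0)
        + M j l * (if i = k then (1:ℝ) else 0) - M j k * (if i = l then (1:ℝ) else 0))^2
      = 4*((n:ℝ)-2)*(∑ i, ∑ j, (M i j)^2) + 4*(∑ i, M i i)^2 := by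
  have expand : ∀ (p q r s : ℝ), (p - q + r - s)^2 =
      p*p + q*q + r*r + s*s - 2*p*q + 2*p*r - 2*p*s - 2*q*r + 2*q*s - 2*r*s := by intros; ring
  simp only [expand]
  simp only [mul_ite, ite_mul, mul_one, mul_zero, zero_mul, one_mul]
  simp only [Finset.sum_add_distrib, Finset.sum_sub_distrib]
  simp only [sum_if_const, ite_ite_same, Finset.sum_ite_eq, Finset.sum_ite_eq', Finset.mem_univ,
    if_true, Finset.sum_const, Finset.card_univ, Fintype.card_fin, nsmul_eq_mul, mul_ite, mul_zero,
    mul_one, Finset.mul_sum]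
  have tflip : ∑ x : Fin n, ∑ x_1 : Fin n, 2 * M x_1 x * M x_1 x
      = ∑ x : Fin n, ∑ x_1 : Fin n, 2 * M x x_1 * M x x_1 := Finset.sum_comm
  have tr2 : (∑ i : Fin n, M i i)^2 = ∑ x : Fin n, ∑ x_1 : Fin n, M x x * M x_1 x_1 := by
    rw [sq, Finset.sum_mul_sum]
  rw [tflip, tr2]
  simp only [Finset.mul_sum, ← Finset.sum_add_distrib, ← Finset.sum_sub_distrib]
  exact Finset.sum_congr rfl fun x _ => Finset.sum_congr rfl fun y _ => by ring

lemma stepA_abs (a b p y x : ℝ) (ha : 0 ≤ a) (hb : 0 ≤ b) (hp : 0 ≤ p) (hx : x^2 ≤ a*p) :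
    b*(x+y)^2 ≤ (a+b)*(b*p + y^2) := by
  rcases eq_or_lt_of_le ha with h|h
  · have hx0 : x = 0 := by nlinarith [sq_nonneg x]
    rw [hx0, ← h]
    nlinarith [mul_nonneg (mul_nonneg hb hb) hp]
  · nlinarith [sq_nonneg (a*y - b*x),
      mul_nonneg (mul_nonneg hb (by linarith : (0:ℝ) ≤ a + b)) (by linarith : 0 ≤ a*p - x^2)]


lemma c2val (nr : ℝ) (h3 : 3 ≤ nr) :
    (Real.sqrt (2*nr) / (4*(nr-2)))^2 = nr/(8*(nr-2)^2) := by
  have h2 : (0:ℝ) < nr - 2 := by linarith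
  have h2' : (0:ℝ) < (nr-2)^2 := by positivity
  rw [div_pow, Real.sq_sqrt (by linarith : (0:ℝ) ≤ 2*nr)]
  rw [div_eq_div_iff (by nlinarith : ((4:ℝ)*(nr-2))^2 ≠ 0) (by nlinarith : (8:ℝ)*(nr-2)^2 ≠ 0)]
  ring

lemma endgame (nr σ τ t3 u2 p2 X c : ℝ) (h3 : 3 ≤ nr) (hσ : 0 < σ)
    (hu2 : 0 ≤ u2) (hp2nn : 0 ≤ p2) (hcs : X^2 ≤ u2*p2)
    (hc2 : c^2 = nr/(8*(nr-2)^2))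
    (hp2 : p2 = 8*(nr*(nr-1)*(nr-2))^2*(σ^2 - τ)
      - 16*(nr*(nr-1)*(nr-2))*(nr-1)*(nr*τ - σ^2) - 8*(nr*(nr-1)*(nr-2))*(nr-2)*σ^2)
    (hkey : 2*t3^2 ≤ σ*(nr*τ - σ^2)) :
    (X + -(8*c*(nr*(nr-1)*(nr-2))*t3))^2
      ≤ 8 * (nr - 2) / (nr - 1) * σ^2 * (u2 + nr / (2 * (nr - 2)) * σ)
          * (nr * (nr - 1) * (nr - 2))^2 := by
  have h0pos : (0:ℝ) < nr := by linarith
  have h1pos : (0:ℝ) < nr - 1 := by linarith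
  have h2pos : (0:ℝ) < nr - 2 := by linarith
  have h2ne : nr - 2 ≠ 0 := ne_of_gt h2pos
  have h1ne : nr - 1 ≠ 0 := ne_of_gt h1pos
  set y := -(8*c*(nr*(nr-1)*(nr-2))*t3) with hydef
  set q := nr / (2 * (nr - 2)) * σ with hqdef
  have hqpos : 0 < q := by rw [hqdef]; exact mul_pos (div_pos h0pos (by linarith)) hσ
  have hy2 : y^2 = 8*nr^3*(nr-1)^2*t3^2 := by
    have h64 : y^2 = 64*(c^2)*((nr*(nr-1)*(nr-2))^2*t3^2) := by rw [hydef]; ring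
    rw [h64, hc2]
    field_simp
    ring
  have hA1 := stepA_abs u2 q p2 y X hu2 hqpos.le hp2nn hcs
  have hstepB : q*p2 + y^2 ≤ q*(8*(nr-2)/(nr-1)*σ^2*(nr*(nr-1)*(nr-2))^2) := by
    have hmulpos : (0:ℝ) < 2*(nr-2)*(nr-1) := mul_pos (by linarith) h1pos
    rw [← mul_le_mul_iff_of_pos_left hmulpos]
    have e1 : 2*(nr-2)*(nr-1)*(q*p2 + y^2)
        = nr*(nr-1)*σ*p2 + 16*(nr-2)*(nr-1)^3*nr^3*t3^2 := by
      rw [hy2, hqdef]; field_simp; ring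
    have e2 : 2*(nr-2)*(nr-1)*(q*(8*(nr-2)/(nr-1)*σ^2*(nr*(nr-1)*(nr-2))^2))
        = 8*nr*(nr-2)*σ^3*(nr*(nr-1)*(nr-2))^2 := by
      rw [hqdef]; field_simp
    rw [e1, e2, hp2]
    have hco : (0:ℝ) ≤ 8*nr^3*(nr-1)^3*(nr-2) := by
      have a1 : (0:ℝ) ≤ nr^3 := by positivity
      have a2 : (0:ℝ) ≤ (nr-1)^3 := pow_nonneg h1pos.le 3
      have := mul_nonneg (mul_nonneg a1 a2) h2pos.le
      linarith [mul_nonneg (mul_nonneg a1 a2) h2pos.le]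
    have keyc := mul_le_mul_of_nonneg_left hkey hco
    linarith [keyc]
  have hstepC : (u2+q)*(q*p2 + y^2)
      ≤ (u2+q)*(q*(8*(nr-2)/(nr-1)*σ^2*(nr*(nr-1)*(nr-2))^2)) :=
    mul_le_mul_of_nonneg_left hstepB (add_nonneg hu2 hqpos.le)
  have h5 : q*(X + y)^2
      ≤ q*((u2+q)*(8*(nr-2)/(nr-1)*σ^2*(nr*(nr-1)*(nr-2))^2)) := by
    have er : q*((u2+q)*(8*(nr-2)/(nr-1)*σ^2*(nr*(nr-1)*(nr-2))^2))
        = (u2+q)*(q*(8*(nr-2)/(nr-1)*σ^2*(nr*(nr-1)*(nr-2))^2)) := by ring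
    rw [er]
    exact le_trans hA1 hstepC
  have h6 := le_of_mul_le_mul_left h5 hqpos
  have er2 : (u2+q)*(8*(nr-2)/(nr-1)*σ^2*(nr*(nr-1)*(nr-2))^2)
      = 8 * (nr - 2) / (nr - 1) * σ^2 * (u2 + q) * (nr * (nr - 1) * (nr - 2))^2 := by ring
  rw [er2] at h6
  exact h6

set_option maxHeartbeats 1000000 in
theorem stmt_9 (n : ℕ) (hn : 3 ≤ n) (A : Fin n → Fin n → ℝ)
    (hsym : ∀ i j, A i j = A j i) (htr : ∑ i, A i i = 0)
    (W : Fin n → Fin n → Fin n → Fin n → ℝ)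
    (hW1 : ∀ i j k l, W i j k l = - W j i k l)
    (hW2 : ∀ i j k l, W i j k l = - W i j l k)
    (hW3 : ∀ i j k l, W i j k l = W k l i j)
    (hTrW : ∀ j l, ∑ i, W i j i l = 0) :
    let δ : Fin n → Fin n → ℝ := fun i j => if i = j then 1 else 0
    let AKg : Fin n → Fin n → Fin n → Fin n → ℝ := fun i j k l =>
      A i k * δ j l - A i l * δ j k + A j l * δ i k - A j k * δ i l
    let AKA : Fin n → Fin n → Fin n → Fin n → ℝ := fun i j k l =>
      2 * (A i k * A j l - A i l * A j k)
    let nA2 : ℝ := ∑ i, ∑ j, (A i j) ^ 2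
    |∑ i, ∑ j, ∑ k, ∑ l,
        (W i j k l + (Real.sqrt (2 * (n : ℝ)) / (4 * ((n : ℝ) - 2))) * AKg i j k l)
          * AKA i j k l| ^ 2
      ≤ (8 * ((n : ℝ) - 2) / ((n : ℝ) - 1)) * nA2 ^ 2 *
          ((∑ i, ∑ j, ∑ k, ∑ l, (W i j k l) ^ 2)
            + ((n : ℝ) / (2 * ((n : ℝ) - 2))) * nA2) := by
  intro δ AKg AKA nA2
  have hnr3 : (3:ℝ) ≤ (n:ℝ) := by exact_mod_cast hn
  set nr : ℝ := (n:ℝ) with hnrdef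
  have h2pos : 0 < nr - 2 := by linarith
  have h1pos : 0 < nr - 1 := by linarith
  have h0pos : 0 < nr := by linarith
  set c : ℝ := Real.sqrt (2*nr) / (4*(nr-2)) with hcdef
  have hσ : nA2 = ∑ i, ∑ j, (A i j)^2 := rfl
  have hσnn : 0 ≤ nA2 := by rw [hσ]; positivity
  set A2 : Fin n → Fin n → ℝ := fun i k => ∑ j, A i j * A j k with hA2def
  have hA2app : ∀ i k : Fin n, (∑ j, A i j * A j k) = A2 i k := fun _ _ => rfl
  have hGram : ∀ i j : Fin n, (∑ k, A i k * A j k) = A2 i j := by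
    intro i j
    exact Finset.sum_congr rfl fun k _ => by rw [hsym j k]
  have htrA2 : ∑ i, A2 i i = nA2 := by
    rw [hσ]
    exact Finset.sum_congr rfl fun i _ => Finset.sum_congr rfl fun j _ => by
      rw [hsym j i]; ring
  set τ : ℝ := ∑ i, ∑ j, (A2 i j)^2 with hτdef
  set t3 : ℝ := ∑ i, ∑ k, (∑ j, A i j * A j k) * A i k with ht3def
  set C : Fin n → Fin n → ℝ :=
    fun i j => 2*nr*(nr-1) * A2 i j - nr*nA2 * (if i = j then (1:ℝ) else 0) with hCdef
  set P : Fin n → Fin n → Fin n → Fin n → ℝ := fun i j k l =>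
    nr*(nr-1)*(nr-2) * (2*(A i k * A j l - A i l * A j k))
      + (C i k * (if j = l then (1:ℝ) else 0) - C i l * (if j = k then (1:ℝ) else 0)
        + C j l * (if i = k then (1:ℝ) else 0) - C j k * (if i = l then (1:ℝ) else 0)) with hPdef
  have hsplit : (∑ i, ∑ j, ∑ k, ∑ l, (W i j k l + c * AKg i j k l) * AKA i j k l)
      = (∑ i, ∑ j, ∑ k, ∑ l, W i j k l * AKA i j k l)
        + c * (∑ i, ∑ j, ∑ k, ∑ l, AKg i j k l * AKA i j k l) := by
    simp only [add_mul, Finset.sum_add_distrib, mul_assoc, ← Finset.mul_sum]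
  have hSG : (∑ i, ∑ j, ∑ k, ∑ l, AKg i j k l * AKA i j k l) = -8 * t3 := by
    have h2 : (∑ i, ∑ j, ∑ k, ∑ l, AKg i j k l * AKA i j k l)
        = ∑ i, ∑ j, ∑ k, ∑ l, (2*(A i k * A j l - A i l * A j k)) *
          (A i k * (if j = l then (1:ℝ) else 0) - A i l * (if j = k then (1:ℝ) else 0)
            + A j l * (if i = k then (1:ℝ) else 0) - A j k * (if i = l then (1:ℝ) else 0)) := by
      refine Finset.sum_congr rfl fun i _ => Finset.sum_congr rfl fun j _ =>
        Finset.sum_congr rfl fun k _ => Finset.sum_congr rfl fun l _ => by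
          show AKg i j k l * AKA i j k l = _
          have e1 : AKg i j k l = A i k * (if j = l then (1:ℝ) else 0)
              - A i l * (if j = k then (1:ℝ) else 0)
              + A j l * (if i = k then (1:ℝ) else 0)
              - A j k * (if i = l then (1:ℝ) else 0) := rfl
          have e2 : AKA i j k l = 2*(A i k * A j l - A i l * A j k) := by
            show 2 * (A i k * A j l - A i l * A j k) = _; rfl
          rw [e1, e2]; ring
    rw [h2, knAKA A A htr, ht3def]
  have hW0 := wzero W hW1 hW2 hTrW C
  have hSWP : (∑ i, ∑ j, ∑ k, ∑ l, W i j k l * P i j k l)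
      = nr*(nr-1)*(nr-2) * (∑ i, ∑ j, ∑ k, ∑ l, W i j k l * AKA i j k l) := by
    simp only [hPdef]
    have hexp : ∀ i j k l : Fin n, W i j k l *
        (nr*(nr-1)*(nr-2) * (2*(A i k * A j l - A i l * A j k))
          + (C i k * (if j = l then (1:ℝ) else 0) - C i l * (if j = k then (1:ℝ) else 0)
            + C j l * (if i = k then (1:ℝ) else 0) - C j k * (if i = l then (1:ℝ) else 0)))
      = nr*(nr-1)*(nr-2) * (W i j k l * (2*(A i k * A j l - A i l * A j k)))
        + W i j k l * (C i k * (if j = l then (1:ℝ) else 0) - C i l * (if j = k then (1:ℝ) else 0)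
            + C j l * (if i = k then (1:ℝ) else 0) - C j k * (if i = l then (1:ℝ) else 0)) :=
      fun _ _ _ _ => by ring
    simp_rw [hexp, Finset.sum_add_distrib, ← Finset.mul_sum]
    rw [hW0, add_zero]
  have hPsq : (∑ i, ∑ j, ∑ k, ∑ l, (P i j k l)^2)
      = (nr*(nr-1)*(nr-2))^2 * (∑ i, ∑ j, ∑ k, ∑ l, (2*(A i k * A j l - A i l * A j k))^2)
        + 2*(nr*(nr-1)*(nr-2)) * (∑ i, ∑ j, ∑ k, ∑ l, (2*(A i k * A j l - A i l * A j k)) *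
            (C i k * (if j = l then (1:ℝ) else 0) - C i l * (if j = k then (1:ℝ) else 0)
              + C j l * (if i = k then (1:ℝ) else 0) - C j k * (if i = l then (1:ℝ) else 0)))
        + (∑ i, ∑ j, ∑ k, ∑ l,
            (C i k * (if j = l then (1:ℝ) else 0) - C i l * (if j = k then (1:ℝ) else 0)
              + C j l * (if i = k then (1:ℝ) else 0) - C j k * (if i = l then (1:ℝ) else 0))^2) := by
    simp only [hPdef]
    have hh : ∀ (a b : ℝ), (nr*(nr-1)*(nr-2)*a + b)^2
        = (nr*(nr-1)*(nr-2))^2*(a^2) + 2*(nr*(nr-1)*(nr-2))*(a*b) + b^2 := by intros; ring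
    simp_rw [hh, Finset.sum_add_distrib, ← Finset.mul_sum]
  have hABC := knAKA A C htr
  have hC2k := knsq C
  rw [← hnrdef] at hC2k
  have hs1 : (∑ i, ∑ k, (∑ j, A i j * A j k) * C i k) = 2*nr*(nr-1)*τ - nr*(nA2*nA2) := by
    simp only [hA2app, hCdef]
    have hpt : ∀ i k : Fin n, A2 i k * (2*nr*(nr-1) * A2 i k - nr*nA2 * (if i = k then (1:ℝ) else 0))
        = 2*nr*(nr-1)*((A2 i k)^2) - nr*nA2*(if i = k then A2 i k else 0) := by
      intro i k; by_cases h : i = k <;> simp [h] <;> ring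
    simp_rw [hpt, Finset.sum_sub_distrib, ← Finset.mul_sum, Finset.sum_ite_eq,
      Finset.mem_univ, if_true]
    rw [htrA2, ← hτdef]
    ring
  have hs2 : (∑ i, ∑ j, (C i j)^2) = 4*nr^2*(nr-1)^2*τ - 4*nr^2*(nr-1)*nA2^2 + nr^3*nA2^2 := by
    simp only [hCdef]
    have hpt : ∀ i j : Fin n, (2*nr*(nr-1) * A2 i j - nr*nA2 * (if i = j then (1:ℝ) else 0))^2
        = 4*nr^2*(nr-1)^2*((A2 i j)^2) - 4*nr^2*(nr-1)*nA2*(if i = j then A2 i j else 0)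
          + nr^2*nA2^2*(if i = j then (1:ℝ) else 0) := by
      intro i j; by_cases h : i = j <;> simp [h] <;> ring
    simp_rw [hpt, Finset.sum_add_distrib, Finset.sum_sub_distrib, ← Finset.mul_sum,
      Finset.sum_ite_eq, Finset.mem_univ, if_true, Finset.sum_const, Finset.card_univ,
      Fintype.card_fin, nsmul_eq_mul]
    rw [htrA2, ← hτdef, ← hnrdef]
    ring
  have hs3 : (∑ i, C i i) = 2*nr*(nr-1)*nA2 - nr^2*nA2 := by
    simp only [hCdef]
    simp only [eq_self_iff_true, if_true, mul_one, Finset.sum_sub_distrib, ← Finset.mul_sum,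
      Finset.sum_const, Finset.card_univ, Fintype.card_fin, nsmul_eq_mul]
    rw [htrA2, ← hnrdef]
    ring
  have hp2val : (∑ i, ∑ j, ∑ k, ∑ l, (P i j k l)^2)
      = 8*(nr*(nr-1)*(nr-2))^2*(nA2^2 - τ) - 16*(nr*(nr-1)*(nr-2))*(nr-1)*(nr*τ - nA2^2)
        - 8*(nr*(nr-1)*(nr-2))*(nr-2)*nA2^2 := by
    rw [hPsq, akasq A, hABC, hC2k, hs1, hs2, hs3]
    simp_rw [hGram]
    rw [← hτdef, ← hσ]
    ring
  have hcs := cs4 W P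
  have hPnn : 0 ≤ ∑ i, ∑ j, ∑ k, ∑ l, (P i j k l)^2 :=
    Finset.sum_nonneg fun _ _ => Finset.sum_nonneg fun _ _ => Finset.sum_nonneg fun _ _ =>
      Finset.sum_nonneg fun _ _ => sq_nonneg _
  have hu2nn : 0 ≤ ∑ i, ∑ j, ∑ k, ∑ l, (W i j k l)^2 :=
    Finset.sum_nonneg fun _ _ => Finset.sum_nonneg fun _ _ => Finset.sum_nonneg fun _ _ =>
      Finset.sum_nonneg fun _ _ => sq_nonneg _
  have hnrne : nr ≠ 0 := ne_of_gt h0pos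
  set B : Fin n → Fin n → ℝ := fun i j => A2 i j - nA2/nr * (if i = j then (1:ℝ) else 0) with hBdef
  have hcsB := cs2 A B
  have hAB : ∑ i, ∑ j, A i j * B i j = t3 := by
    simp only [hBdef]
    have hpt : ∀ i j : Fin n, A i j * (A2 i j - nA2/nr * (if i = j then (1:ℝ) else 0))
        = A2 i j * A i j - nA2/nr * (if i = j then A i j else 0) := by
      intro i j; by_cases h : i = j <;> simp [h] <;> try ring
    simp_rw [hpt, Finset.sum_sub_distrib, ← Finset.mul_sum, Finset.sum_ite_eq,
      Finset.mem_univ, if_true, htr, mul_zero, sub_zero]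
    rfl
  have hB2 : ∑ i, ∑ j, (B i j)^2 = τ - nA2^2/nr := by
    simp only [hBdef]
    have hpt : ∀ i j : Fin n, (A2 i j - nA2/nr * (if i = j then (1:ℝ) else 0))^2
        = (A2 i j)^2 - 2*(nA2/nr)*(if i = j then A2 i j else 0)
          + (nA2/nr)^2 * (if i = j then (1:ℝ) else 0) := by
      intro i j; by_cases h : i = j <;> simp [h] <;> ring
    simp_rw [hpt, Finset.sum_add_distrib, Finset.sum_sub_distrib, ← Finset.mul_sum,
      Finset.sum_ite_eq, Finset.mem_univ, if_true, Finset.sum_const, Finset.card_univ,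
      Fintype.card_fin, nsmul_eq_mul]
    rw [htrA2, ← hτdef, ← hnrdef]
    field_simp
    ring
  have hB2nn : 0 ≤ τ - nA2^2/nr := by
    rw [← hB2]
    exact Finset.sum_nonneg fun _ _ => Finset.sum_nonneg fun _ _ => sq_nonneg _
  have hkey : 2*t3^2 ≤ nA2*(nr*τ - nA2^2) := by
    rw [hAB, ← hσ, hB2] at hcsB
    have h3 : nA2^2/nr*nr = nA2^2 := div_mul_cancel₀ _ hnrne
    nlinarith [hcsB, mul_nonneg hσnn hB2nn, hnr3, h3,
      mul_nonneg (by linarith : (0:ℝ) ≤ nr - 2) (mul_nonneg hσnn hB2nn)]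
  rcases eq_or_lt_of_le hσnn with hz | hσpos
  · have h1 : ∑ i, ∑ j, (A i j)^2 = 0 := by rw [← hσ, ← hz]
    have hA0 : ∀ i j, A i j = 0 := by
      intro i j
      have h2 := (Finset.sum_eq_zero_iff_of_nonneg
        (fun i _ => Finset.sum_nonneg fun j _ => sq_nonneg (A i j))).mp h1 i (Finset.mem_univ i)
      have h3 := (Finset.sum_eq_zero_iff_of_nonneg
        (fun j _ => sq_nonneg (A i j))).mp h2 j (Finset.mem_univ j)
      exact pow_eq_zero_iff two_ne_zero |>.mp h3
    have hAKA0 : ∀ i j k l : Fin n, AKA i j k l = 0 := by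
      intro i j k l
      show 2 * (A i k * A j l - A i l * A j k) = 0
      rw [hA0 i k, hA0 j l, hA0 i l, hA0 j k]; ring
    rw [← hz]
    simp [hAKA0]
  · set X := ∑ i, ∑ j, ∑ k, ∑ l, W i j k l * P i j k l with hXdef
    set u2 := ∑ i, ∑ j, ∑ k, ∑ l, (W i j k l)^2 with hu2def
    set p2 := ∑ i, ∑ j, ∑ k, ∑ l, (P i j k l)^2 with hp2def
    have hDpos : 0 < nr*(nr-1)*(nr-2) := mul_pos (mul_pos h0pos h1pos) h2pos
    have hDne : nr*(nr-1)*(nr-2) ≠ 0 := ne_of_gt hDpos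
    rw [hsplit, hSG, sq_abs]
    have hSW : (∑ i, ∑ j, ∑ k, ∑ l, W i j k l * AKA i j k l)
        = X / (nr*(nr-1)*(nr-2)) := by
      rw [eq_div_iff hDne, hSWP]; ring
    rw [hSW]
    have hcomb : (X / (nr*(nr-1)*(nr-2)) + c * (-8*t3))
        = (X + (-(8*c*(nr*(nr-1)*(nr-2))*t3))) / (nr*(nr-1)*(nr-2)) := by
      field_simp
    rw [hcomb, div_pow, div_le_iff₀ (pow_pos hDpos 2)]
    have hc2 : c^2 = nr/(8*(nr-2)^2) := by rw [hcdef]; exact c2val nr hnr3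
    exact endgame nr nA2 τ t3 u2 p2 X c hnr3 hσpos hu2nn hPnn hcs hc2 hp2val hkey
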